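/- Let p be a prime and P a finite p-group. Let A and B be subgroups of the automorphism group of P such that A and B commute elementwise (so that A × B acts on P), A is a p'-group (its order is coprime to p), and B is a p-group. If every element of A acts trivially on the subgroup C_P(B) of fixed points of B in P, then A is the trivial group. -/

import Mathlib

open Subgroup MulAction

universe u

namespace ThompsonABAux

/-- The subgroup of points fixed by an action via a hom into `MulAut`. -/
def fixedSub {B P : Type*} [Group B] [Group P] (fB : B →* MulAut P) : Subgroup P where
  carrier := {x | ∀ b : B, fB b x = x}
  one_mem' := fun b => map_one (fB b)
  mul_mem' := fun {x y} hx hy b => by rw [map_mul, hx b, hy b]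
  inv_mem' := fun {x} hx b => by rw [map_inv, hx b]


/-- Coprime-order trick. -/
lemma fix_aux {p n : ℕ} {P : Type*} [Group P] (a : MulAut P) (x k : P)
    (hxk : a x = x * k) (hk : a k = k) (han : a ^ n = 1)
    (hn : n.Coprime p) (hord : ∃ j : ℕ, k ^ p ^ j = 1) : k = 1 := by
  have hpow : ∀ m : ℕ, (a ^ m) x = x * k ^ m := by
    intro m
    induction m with
    | zero => simp
    | succ m ih =>
      have h : (a ^ (m + 1)) x = a ((a ^ m) x) := by
        rw [pow_succ', MulAut.mul_apply]
      rw [h, ih, map_mul, hxk, map_pow, hk, pow_succ', mul_assoc]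
  have h1 : k ^ n = 1 := by
    have h := hpow n
    rw [han, MulAut.one_apply] at h
    have h2 := h.symm
    rwa [mul_eq_left] at h2
  obtain ⟨j, hj⟩ := hord
  have h4 : orderOf k ∣ Nat.gcd n (p ^ j) :=
    Nat.dvd_gcd (orderOf_dvd_of_pow_eq_one h1) (orderOf_dvd_of_pow_eq_one hj)
  rw [hn.pow_right j, Nat.dvd_one] at h4
  exact orderOf_eq_one_iff.mp h4

lemma map_eq_self {P : Type*} [Group P] (R : Subgroup P) (e : MulAut P)
    (he : ∀ r ∈ R, e r = r) : R.map (e : P →* P) = R := by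
  apply le_antisymm
  · rintro y ⟨r, hr, rfl⟩
    simpa [he r hr] using hr
  · intro r hr
    exact ⟨r, hr, he r hr⟩

/-- The induced automorphism on the quotient. -/
def inducedAut {P : Type*} [Group P] (R : Subgroup P) [R.Normal] (e : MulAut P)
    (he : ∀ r ∈ R, e r = r) : MulAut (P ⧸ R) :=
  QuotientGroup.congr R R e (map_eq_self R e he)

lemma inducedAut_mk {P : Type*} [Group P] (R : Subgroup P) [R.Normal] (e : MulAut P)
    (he : ∀ r ∈ R, e r = r) (x : P) :
    inducedAut R e he ((x : P ⧸ R)) = ((e x : P) : P ⧸ R) := rfl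

/-- The induced hom into the automorphisms of the quotient. -/
def inducedHom {G P : Type*} [Group G] [Group P] (R : Subgroup P) [R.Normal]
    (f : G →* MulAut P) (hf : ∀ g : G, ∀ r ∈ R, f g r = r) : G →* MulAut (P ⧸ R) :=
  MonoidHom.mk' (fun g => inducedAut R (f g) (hf g)) (by
    intro g g'
    apply MulEquiv.ext
    intro q
    induction q using QuotientGroup.induction_on with
    | H x => simp [inducedAut_mk, map_mul, MulAut.mul_apply])

lemma inducedHom_mk {G P : Type*} [Group G] [Group P] (R : Subgroup P) [R.Normal]
    (f : G →* MulAut P) (hf : ∀ g : G, ∀ r ∈ R, f g r = r) (g : G) (x : P) :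
    inducedHom R f hf g ((x : P ⧸ R)) = ((f g x : P) : P ⧸ R) := rfl

section Key

variable {p : ℕ} [Fact p.Prime] {A B : Type*} [Group A] [Group B]

lemma key (hA : (Nat.card A).Coprime p) (hB : IsPGroup p B) :
    ∀ (n : ℕ) (P : Type u) [Group P] [Finite P], Nat.card P ≤ n → IsPGroup p P →
      ∀ (fA : A →* MulAut P) (fB : B →* MulAut P),
        (∀ a b, Commute (fA a) (fB b)) →
        (∀ (a : A) (x : P), (∀ b : B, fB b x = x) → fA a x = x) →
        ∀ (a : A) (x : P), fA a x = x := by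
  intro n
  induction n with
  | zero =>
    intro P _ _ hcard
    exact absurd (Nat.le_zero.mp hcard) (Nat.card_pos (α := P)).ne'
  | succ n IH =>
    intro P _ _ hcard hP fA fB hcomm hfix
    by_cases htriv : Subsingleton P
    · intro a x; exact Subsingleton.elim _ _
    have hnt : Nontrivial P := not_subsingleton_iff_nontrivial.mp htriv
    -- pointwise commuting
    have hcomm' : ∀ (a : A) (b : B) (x : P), fA a (fB b x) = fB b (fA a x) := by
      intro a b x
      have := DFunLike.congr_fun (hcomm a b) x
      simpa [MulAut.mul_apply] using this
    -- the center is B-invariant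
    have hcent : ∀ (b : B) (z : P), z ∈ Subgroup.center P → fB b z ∈ Subgroup.center P := by
      intro b z hz
      rw [Subgroup.mem_center_iff]
      intro g
      have : g = fB b ((fB b)⁻¹ g) := by simp
      rw [this, ← map_mul, ← map_mul, Subgroup.mem_center_iff.mp hz ((fB b)⁻¹ g)]
    -- R = C_{Z(P)}(B)
    set R : Subgroup P := Subgroup.center P ⊓ fixedSub fB with hR
    have hRcent : ∀ r ∈ R, r ∈ Subgroup.center P := fun r hr => hr.1
    have hRB : ∀ (b : B), ∀ r ∈ R, fB b r = r := fun b r hr => hr.2 b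
    have hRA : ∀ (a : A), ∀ r ∈ R, fA a r = r := fun a r hr => hfix a r hr.2
    haveI : R.Normal := by
      constructor
      intro r hr g
      have : g * r * g⁻¹ = r := by
        rw [Subgroup.mem_center_iff.mp (hRcent r hr) g]
        group
      rwa [this]
    -- R is nontrivial
    have hRnt : ∃ r : P, r ∈ R ∧ r ≠ 1 := by
      letI : SMul B ↥(Subgroup.center P) := ⟨fun b z => ⟨fB b z, hcent b z z.2⟩⟩
      letI : MulAction B ↥(Subgroup.center P) :=
        { one_smul := fun z => Subtype.ext (show fB 1 (z : P) = z by simp)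
          mul_smul := fun b b' z =>
            Subtype.ext (show fB (b * b') (z : P) = fB b (fB b' (z : P)) by
              simp [map_mul, MulAut.mul_apply]) }
      have hsmul : ∀ (b : B) (z : ↥(Subgroup.center P)), ((b • z : ↥(Subgroup.center P)) : P) = fB b z :=
        fun b z => rfl
      haveI : Nontrivial ↥(Subgroup.center P) := hP.center_nontrivial
      have hcsub : IsPGroup p ↥(Subgroup.center P) := hP.to_subgroup _
      obtain ⟨m, hm0, hm⟩ := hcsub.nontrivial_iff_card.mp inferInstance
      have hdvd : p ∣ Nat.card ↥(Subgroup.center P) := hm ▸ dvd_pow_self p hm0.ne'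
      have hone : (1 : ↥(Subgroup.center P)) ∈ fixedPoints B ↥(Subgroup.center P) := by
        intro b
        exact Subtype.ext (show fB b (1 : P) = 1 by simp)
      obtain ⟨z, hzfix, hz1⟩ := hB.exists_fixed_point_of_prime_dvd_card_of_fixed_point
        ↥(Subgroup.center P) hdvd hone
      refine ⟨(z : P), ⟨z.2, fun b => ?_⟩, ?_⟩
      · have := hzfix b
        exact congrArg Subtype.val this
      · intro h
        exact hz1 (Subtype.ext h.symm)
    obtain ⟨r0, hr0R, hr01⟩ := hRnt
    have hcardlt : Nat.card (P ⧸ R) < Nat.card P := by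
      have h1 : Nat.card P = Nat.card (P ⧸ R) * Nat.card R :=
        Subgroup.card_eq_card_quotient_mul_card_subgroup R
      have h2 : 1 < Nat.card R :=
        Finite.one_lt_card_iff_nontrivial.mpr ⟨⟨r0, hr0R⟩, 1, by
          simp only [ne_eq, Subtype.ext_iff]; exact hr01⟩
      have h3 : 0 < Nat.card (P ⧸ R) := Nat.card_pos
      rw [h1]
      exact (lt_mul_iff_one_lt_right h3).mpr h2
    set fA' : A →* MulAut (P ⧸ R) := inducedHom R fA hRA with hfA'
    set fB' : B →* MulAut (P ⧸ R) := inducedHom R fB hRB with hfB'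
    -- the crucial claim: if the class of x is B-fixed, then x is A-fixed
    have hDfix : ∀ (a : A) (x : P),
        (∀ b : B, ((fB b x : P) : P ⧸ R) = ((x : P) : P ⧸ R)) → fA a x = x := by
      intro a x hx
      set k : P := x⁻¹ * fA a x with hkdef
      have hkB : ∀ b : B, fB b k = k := by
        intro b
        have hrmem : x⁻¹ * fB b x ∈ R := by
          have h := (QuotientGroup.eq).mp (hx b)
          have h2 := R.inv_mem h
          simpa [mul_inv_rev] using h2
        set r : P := x⁻¹ * fB b x with hrdef
        have hbx : fB b x = x * r := by rw [hrdef]; group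
        have hstep : fB b k = r⁻¹ * (k * r) := by
          rw [hkdef, map_mul, map_inv, ← hcomm' a b x, hbx, map_mul, hRA a r hrmem]
          group
        rw [hstep, Subgroup.mem_center_iff.mp (hRcent r hrmem) k]
        group
      have hkA : fA a k = k := hfix a k hkB
      have hxk : fA a x = x * k := by rw [hkdef]; group
      have hk1 : k = 1 := fix_aux (fA a) x k hxk hkA
        (by rw [← map_pow, pow_card_eq_one', map_one]) hA (hP k)
      rw [hxk, hk1, mul_one]
    -- hypotheses for the quotient
    have hcommQ : ∀ (a : A) (b : B), Commute (fA' a) (fB' b) := by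
      intro a b
      apply MulEquiv.ext
      intro q
      induction q using QuotientGroup.induction_on with
      | H x =>
        show fA' a (fB' b (x : P ⧸ R)) = fB' b (fA' a (x : P ⧸ R))
        rw [hfA', hfB', inducedHom_mk, inducedHom_mk, inducedHom_mk, inducedHom_mk,
          hcomm' a b x]
    have hfixQ : ∀ (a : A) (q : P ⧸ R), (∀ b : B, fB' b q = q) → fA' a q = q := by
      intro a q
      induction q using QuotientGroup.induction_on with
      | H x =>
        intro hq
        have hx : ∀ b : B, ((fB b x : P) : P ⧸ R) = ((x : P) : P ⧸ R) := by
          intro b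
          have := hq b
          rwa [hfB', inducedHom_mk] at this
        rw [hfA', inducedHom_mk, hDfix a x hx]
    have hQ : ∀ (a : A) (q : P ⧸ R), fA' a q = q :=
      IH (P ⧸ R) (Nat.lt_succ_iff.mp (lt_of_lt_of_le hcardlt hcard))
        (hP.to_quotient R) fA' fB' hcommQ hfixQ
    -- conclude
    intro a x
    have hxQ : ((x : P) : P ⧸ R) = ((fA a x : P) : P ⧸ R) := by
      have := hQ a ((x : P) : P ⧸ R)
      rw [hfA', inducedHom_mk] at this
      exact this.symm
    have hkR : x⁻¹ * fA a x ∈ R := (QuotientGroup.eq).mp hxQ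
    set k : P := x⁻¹ * fA a x with hkdef
    have hkA : fA a k = k := hRA a k hkR
    have hxk : fA a x = x * k := by rw [hkdef]; group
    have hk1 : k = 1 := fix_aux (fA a) x k hxk hkA
      (by rw [← map_pow, pow_card_eq_one', map_one]) hA (hP k)
    rw [hxk, hk1, mul_one]


end Key

end ThompsonABAux

/-- **Thompson's A × B-Lemma.** Let `p` be a prime and `P` a finite `p`-group.
Let `A` and `B` be subgroups of `Aut(P)` that commute elementwise, with `A`
a `p'`-group and `B` a `p`-group. If every element of `A` acts trivially on
the fixed-point subgroup `C_P(B)`, then `A` is trivial. -/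
theorem thompson_A_times_B_lemma {p : ℕ} [Fact p.Prime]
    (P : Type*) [Group P] [Fintype P] (hP : IsPGroup p P)
    (A B : Subgroup (MulAut P))
    (hcomm : ∀ a ∈ A, ∀ b ∈ B, Commute a b)
    (hA : (Nat.card A).Coprime p)
    (hB : IsPGroup p B)
    (hfix : ∀ a ∈ A, ∀ x : P, (∀ b ∈ B, b x = x) → a x = x) :
    A = ⊥ := by
  have hkey := ThompsonABAux.key (A := ↥A) (B := ↥B) hA hB (Nat.card P) P le_rfl hP
    A.subtype B.subtype
    (fun a b => hcomm a a.2 b b.2)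
    (fun a x hx => hfix a a.2 x (fun b hb => hx ⟨b, hb⟩))
  rw [Subgroup.eq_bot_iff_forall]
  intro a ha
  apply MulEquiv.ext
  intro x
  simpa using hkey ⟨a, ha⟩ x
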